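/- If F^σ T admits a degree-inverting involution, then the number of equivalence classes of degree-inverting involutions on F^σ T equals the index |Ĥ / S(Ĥ)| where Ĥ = Hom(T, F^×) and S(Ĥ) is the subgroup of squares of Ĥ. -/

import Mathlib

set_option linter.unusedSectionVars false


/-- A 2-cocycle on `T` with values in `Fˣ` (trivial action). -/
def IsCocycle {T : Type*} [Group T] {F : Type*} [Field F] (σ : T → T → Fˣ) : Prop :=
  ∀ u v w : T, σ u v * σ (u * v) w = σ u (v * w) * σ v w

/-- The twisted product on `F^σ T = T →₀ F`, determined on the basis by
`X_u * X_v = σ(u,v) X_{uv}`. -/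
noncomputable def twistedMul {T : Type*} [Group T] {F : Type*} [Field F]
    (σ : T → T → Fˣ) (f g : T →₀ F) : T →₀ F :=
  f.sum fun u a => g.sum fun v b => Finsupp.single (u * v) (a * b * (σ u v : F))

/-- A degree-inverting involution of `F^σ T`: an `F`-linear bijection which is an
anti-automorphism, squares to the identity, and maps the homogeneous component of
degree `u` (the span of `X_u`) into the component of degree `u⁻¹`. -/
def IsDegInvInvolution {T : Type*} [Group T] {F : Type*} [Field F]
    (σ : T → T → Fˣ) (ρ : (T →₀ F) ≃ₗ[F] (T →₀ F)) : Prop :=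
  (∀ f g : T →₀ F, ρ (twistedMul σ f g) = twistedMul σ (ρ g) (ρ f)) ∧
  (∀ f : T →₀ F, ρ (ρ f) = f) ∧
  (∀ (u : T) (a : F), ∃ c : F, ρ (Finsupp.single u a) = Finsupp.single u⁻¹ c)


/-- A `T`-graded (degree-preserving) automorphism of `F^σ T`: an `F`-linear bijection
which is multiplicative and preserves each homogeneous component `span{X_u}`. -/
def IsGradedAut {T : Type*} [Group T] {F : Type*} [Field F]
    (σ : T → T → Fˣ) (ψ : (T →₀ F) ≃ₗ[F] (T →₀ F)) : Prop :=
  (∀ f g : T →₀ F, ψ (twistedMul σ f g) = twistedMul σ (ψ f) (ψ g)) ∧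
  (∀ (u : T) (a : F), ∃ c : F, ψ (Finsupp.single u a) = Finsupp.single u c)


section aux
variable {T : Type*} [Group T] {F : Type*} [Field F] (σ : T → T → Fˣ)

open Finsupp

lemma twistedMul_single (u v : T) (a b : F) :
    twistedMul σ (single u a) (single v b) = single (u * v) (a * b * (σ u v : F)) := by
  unfold twistedMul
  rw [Finsupp.sum_single_index, Finsupp.sum_single_index]
  · simp
  · simp

lemma twistedMul_zero_left (g : T →₀ F) : twistedMul σ 0 g = 0 := by
  simp [twistedMul]

lemma twistedMul_zero_right (f : T →₀ F) : twistedMul σ f 0 = 0 := by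
  simp [twistedMul]

lemma twistedMul_add_left (f₁ f₂ g : T →₀ F) :
    twistedMul σ (f₁ + f₂) g = twistedMul σ f₁ g + twistedMul σ f₂ g := by
  unfold twistedMul
  rw [Finsupp.sum_add_index']
  · intro u; simp
  · intro u a₁ a₂
    rw [← Finsupp.sum_add]
    congr 1; ext v b
    rw [← Finsupp.single_add]
    ring_nf

lemma twistedMul_add_right (f g₁ g₂ : T →₀ F) :
    twistedMul σ f (g₁ + g₂) = twistedMul σ f g₁ + twistedMul σ f g₂ := by
  unfold twistedMul
  rw [← Finsupp.sum_add]
  congr 1; ext u a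
  rw [Finsupp.sum_add_index']
  · intro v; simp
  · intro v b₁ b₂
    rw [← Finsupp.single_add]
    ring_nf

noncomputable def Lmap (ν : T → Fˣ) : (T →₀ F) →ₗ[F] (T →₀ F) :=
  Finsupp.lsum F fun u => (ν u : F) • Finsupp.lsingle u

lemma Lmap_single (ν : T → Fˣ) (u : T) (a : F) :
    Lmap ν (single u a) = single u ((ν u : F) * a) := by
  simp [Lmap, Finsupp.smul_single]

noncomputable def Dmap (ν : T → Fˣ) : (T →₀ F) ≃ₗ[F] (T →₀ F) :=
  LinearEquiv.ofLinear (Lmap ν) (Lmap fun u => (ν u)⁻¹)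
    (by
      apply Finsupp.lhom_ext
      intro u a
      simp only [LinearMap.coe_comp, Function.comp_apply, LinearMap.id_coe, id_eq]
      rw [Lmap_single, Lmap_single, ← mul_assoc]
      simp)
    (by
      apply Finsupp.lhom_ext
      intro u a
      simp only [LinearMap.coe_comp, Function.comp_apply, LinearMap.id_coe, id_eq]
      rw [Lmap_single, Lmap_single, ← mul_assoc]
      simp)

lemma Dmap_single (ν : T → Fˣ) (u : T) (a : F) :
    Dmap ν (single u a) = single u ((ν u : F) * a) := Lmap_single ν u a

lemma Dmap_symm_single (ν : T → Fˣ) (u : T) (a : F) :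
    (Dmap ν).symm (single u a) = single u ((ν u : F)⁻¹ * a) := by
  show (Lmap fun u => (ν u)⁻¹) (single u a) = _
  rw [Lmap_single]
  norm_num

lemma Dmap_mul (η : T →* Fˣ) (f g : T →₀ F) :
    Dmap (fun u => η u) (twistedMul σ f g)
      = twistedMul σ (Dmap (fun u => η u) f) (Dmap (fun u => η u) g) := by
  induction f using Finsupp.induction_linear with
  | zero => simp [twistedMul_zero_left]
  | add f₁ f₂ h₁ h₂ =>
      rw [twistedMul_add_left, map_add, h₁, h₂, map_add, twistedMul_add_left]
  | single u a =>
      induction g using Finsupp.induction_linear with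
      | zero => simp [twistedMul_zero_right]
      | add g₁ g₂ h₁ h₂ =>
          rw [twistedMul_add_right, map_add, h₁, h₂, map_add, twistedMul_add_right]
      | single v b =>
          rw [twistedMul_single, Dmap_single, Dmap_single, Dmap_single,
            twistedMul_single, map_mul]
          congr 1
          push_cast
          ring

end aux
section aux2
variable {T : Type*} [Group T] {F : Type*} [Field F] (σ : T → T → Fˣ)

open Finsupp

/-- Coefficient function of a degree-inverting map. -/
noncomputable def cOf (ρ : (T →₀ F) ≃ₗ[F] (T →₀ F)) : T → F :=
  fun u => (ρ (single u 1)) u⁻¹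

lemma single_smul_one (u : T) (a : F) : a • single u (1 : F) = single u a := by
  rw [Finsupp.smul_single', mul_one]

lemma cOf_spec {ρ : (T →₀ F) ≃ₗ[F] (T →₀ F)} (hρ : IsDegInvInvolution σ ρ)
    (u : T) (a : F) : ρ (single u a) = single u⁻¹ (a * cOf ρ u) := by
  obtain ⟨c, hc⟩ := hρ.2.2 u 1
  have hcof : cOf ρ u = c := by
    rw [cOf, hc, Finsupp.single_eq_same]
  rw [← single_smul_one u a, map_smul, hc, hcof, Finsupp.smul_single', mul_comm]

lemma cOf_mul_inv {ρ : (T →₀ F) ≃ₗ[F] (T →₀ F)} (hρ : IsDegInvInvolution σ ρ)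
    (u : T) : cOf ρ u * cOf ρ u⁻¹ = 1 := by
  have h := hρ.2.1 (single u 1)
  rw [cOf_spec σ hρ u 1, cOf_spec σ hρ u⁻¹, inv_inv, one_mul] at h
  have := congrArg (fun f : T →₀ F => f u) h
  simpa using this

lemma cOf_ne_zero {ρ : (T →₀ F) ≃ₗ[F] (T →₀ F)} (hρ : IsDegInvInvolution σ ρ)
    (u : T) : cOf ρ u ≠ 0 :=
  left_ne_zero_of_mul_eq_one (cOf_mul_inv σ hρ u)

lemma cOf_cocycle {ρ : (T →₀ F) ≃ₗ[F] (T →₀ F)} (hρ : IsDegInvInvolution σ ρ)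
    (u v : T) :
    (σ u v : F) * cOf ρ (u * v) = cOf ρ u * cOf ρ v * (σ v⁻¹ u⁻¹ : F) := by
  have h := hρ.1 (single u (1:F)) (single v (1:F))
  rw [twistedMul_single, cOf_spec σ hρ, cOf_spec σ hρ u, cOf_spec σ hρ v,
    twistedMul_single] at h
  have := congrArg (fun f : T →₀ F => f (v⁻¹ * u⁻¹)) h
  simp only [mul_inv_rev, Finsupp.single_eq_same] at this
  linear_combination this

/-- Coefficient function of a graded automorphism. -/
noncomputable def dOf (φ : (T →₀ F) ≃ₗ[F] (T →₀ F)) : T → F :=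
  fun u => (φ (single u 1)) u

lemma dOf_spec {φ : (T →₀ F) ≃ₗ[F] (T →₀ F)} (hφ : IsGradedAut σ φ)
    (u : T) (a : F) : φ (single u a) = single u (a * dOf φ u) := by
  obtain ⟨c, hc⟩ := hφ.2 u 1
  have hcof : dOf φ u = c := by
    rw [dOf, hc, Finsupp.single_eq_same]
  rw [← single_smul_one u a, map_smul, hc, hcof, Finsupp.smul_single', mul_comm]

lemma dOf_ne_zero {φ : (T →₀ F) ≃ₗ[F] (T →₀ F)} (hφ : IsGradedAut σ φ)
    (u : T) : dOf φ u ≠ 0 := by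
  intro h0
  have h := dOf_spec σ hφ u 1
  rw [h0, mul_zero, Finsupp.single_zero] at h
  have := φ.injective (h.trans (map_zero φ).symm)
  exact one_ne_zero (Finsupp.single_eq_zero.mp this)

lemma dOf_mul {φ : (T →₀ F) ≃ₗ[F] (T →₀ F)} (hφ : IsGradedAut σ φ)
    (u v : T) : dOf φ (u * v) = dOf φ u * dOf φ v := by
  have h := hφ.1 (single u (1:F)) (single v (1:F))
  rw [twistedMul_single, dOf_spec σ hφ, dOf_spec σ hφ u, dOf_spec σ hφ v,
    twistedMul_single] at h
  have := congrArg (fun f : T →₀ F => f (u * v)) h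
  simp only [Finsupp.single_eq_same] at this
  have hσ : (σ u v : F) ≠ 0 := Units.ne_zero _
  have h2 : (σ u v : F) * dOf φ (u * v) = (σ u v : F) * (dOf φ u * dOf φ v) := by
    linear_combination this
  exact mul_left_cancel₀ hσ h2

end aux2
section aux3
variable {T : Type*} [Group T] {F : Type*} [Field F] (σ : T → T → Fˣ)

open Finsupp

/-- The character of an involution relative to a base involution `ρ₀`. -/
noncomputable def chiOf (ρ₀ ρ : (T →₀ F) ≃ₗ[F] (T →₀ F))
    (h₀ : IsDegInvInvolution σ ρ₀) (hρ : IsDegInvInvolution σ ρ) : T →* Fˣ :=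
  MonoidHom.mk' (fun u => Units.mk0 (cOf ρ u * (cOf ρ₀ u)⁻¹)
    (mul_ne_zero (cOf_ne_zero σ hρ u) (inv_ne_zero (cOf_ne_zero σ h₀ u))))
    (by
      intro a b
      apply Units.ext
      simp only [Units.val_mul, Units.val_mk0]
      have h1 := cOf_cocycle σ hρ a b
      have h2 := cOf_cocycle σ h₀ a b
      have hs' : (σ b⁻¹ a⁻¹ : F) ≠ 0 := Units.ne_zero _
      have key : cOf ρ (a * b) * (cOf ρ₀ a * cOf ρ₀ b)
          = cOf ρ a * cOf ρ b * cOf ρ₀ (a * b) := by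
        apply mul_right_cancel₀ hs'
        linear_combination cOf ρ₀ (a * b) * h1 - cOf ρ (a * b) * h2
      have n1 := cOf_ne_zero σ h₀ (a * b)
      have n2 := cOf_ne_zero σ h₀ a
      have n3 := cOf_ne_zero σ h₀ b
      field_simp
      linear_combination key)

lemma chiOf_val (ρ₀ ρ : (T →₀ F) ≃ₗ[F] (T →₀ F))
    (h₀ : IsDegInvInvolution σ ρ₀) (hρ : IsDegInvInvolution σ ρ) (u : T) :
    ((chiOf σ ρ₀ ρ h₀ hρ u : Fˣ) : F) = cOf ρ u * (cOf ρ₀ u)⁻¹ := rfl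

/-- The character of a graded automorphism. -/
noncomputable def etaOf (φ : (T →₀ F) ≃ₗ[F] (T →₀ F)) (hφ : IsGradedAut σ φ) :
    T →* Fˣ :=
  MonoidHom.mk' (fun u => Units.mk0 (dOf φ u) (dOf_ne_zero σ hφ u))
    (by
      intro a b
      apply Units.ext
      simp only [Units.val_mul, Units.val_mk0]
      exact dOf_mul σ hφ a b)

lemma dOf_inv {φ : (T →₀ F) ≃ₗ[F] (T →₀ F)} (hφ : IsGradedAut σ φ) (u : T) :
    dOf φ u⁻¹ = (dOf φ u)⁻¹ := by
  have := congrArg (fun x : Fˣ => (x : F)) (map_inv (etaOf σ φ hφ) u)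
  simpa [etaOf, Units.val_inv_eq_inv_val] using this

lemma gradedAut_symm_single {φ : (T →₀ F) ≃ₗ[F] (T →₀ F)} (hφ : IsGradedAut σ φ)
    (u : T) (b : F) : φ.symm (single u b) = single u (b * (dOf φ u)⁻¹) := by
  apply φ.injective
  rw [LinearEquiv.apply_symm_apply, dOf_spec σ hφ]
  congr 1
  field_simp [dOf_ne_zero σ hφ u]

/-- The involution built from a base involution and a character. -/
noncomputable def rhoOf (ρ₀ : (T →₀ F) ≃ₗ[F] (T →₀ F)) (χ : T →* Fˣ) :
    (T →₀ F) ≃ₗ[F] (T →₀ F) :=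
  ρ₀.trans (Dmap fun u => χ⁻¹ u)

lemma chi_inv_inv (χ : T →* Fˣ) (u : T) : ((χ⁻¹ u⁻¹ : Fˣ) : F) = (χ u : F) := by
  rw [MonoidHom.inv_apply, map_inv, inv_inv]

lemma rhoOf_single {ρ₀ : (T →₀ F) ≃ₗ[F] (T →₀ F)} (h₀ : IsDegInvInvolution σ ρ₀)
    (χ : T →* Fˣ) (u : T) (a : F) :
    rhoOf ρ₀ χ (single u a) = single u⁻¹ ((χ u : F) * (a * cOf ρ₀ u)) := by
  rw [rhoOf, LinearEquiv.trans_apply, cOf_spec σ h₀, Dmap_single, chi_inv_inv]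

lemma rhoOf_isInvol {ρ₀ : (T →₀ F) ≃ₗ[F] (T →₀ F)} (h₀ : IsDegInvInvolution σ ρ₀)
    (χ : T →* Fˣ) : IsDegInvInvolution σ (rhoOf ρ₀ χ) := by
  refine ⟨?_, ?_, ?_⟩
  · intro f g
    rw [rhoOf, LinearEquiv.trans_apply, h₀.1, LinearEquiv.trans_apply,
      LinearEquiv.trans_apply]
    exact Dmap_mul σ χ⁻¹ _ _
  · intro f
    induction f using Finsupp.induction_linear with
    | zero => simp
    | add f₁ f₂ h₁ h₂ => rw [map_add, map_add, h₁, h₂]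
    | single u a =>
        rw [rhoOf_single σ h₀, rhoOf_single σ h₀, inv_inv]
        congr 1
        have hc := cOf_mul_inv σ h₀ u
        have hχ : ((χ u⁻¹ : Fˣ) : F) = ((χ u : F))⁻¹ := by
          rw [map_inv]; exact Units.val_inv_eq_inv_val _
        have hne : (χ u : F) ≠ 0 := Units.ne_zero _
        rw [hχ, show ((χ u : F) * (a * cOf ρ₀ u)) * cOf ρ₀ u⁻¹
            = (χ u : F) * (a * (cOf ρ₀ u * cOf ρ₀ u⁻¹)) from by ring, hc, mul_one,
          inv_mul_cancel_left₀ hne]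
  · intro u a
    exact ⟨_, rhoOf_single σ h₀ χ u a⟩

lemma chiOf_rhoOf {ρ₀ : (T →₀ F) ≃ₗ[F] (T →₀ F)} (h₀ : IsDegInvInvolution σ ρ₀)
    (χ : T →* Fˣ) :
    chiOf σ ρ₀ (rhoOf ρ₀ χ) h₀ (rhoOf_isInvol σ h₀ χ) = χ := by
  ext u
  have hc : cOf (rhoOf ρ₀ χ) u = (χ u : F) * (1 * cOf ρ₀ u) := by
    rw [cOf, rhoOf_single σ h₀, Finsupp.single_eq_same]
  have : ((chiOf σ ρ₀ (rhoOf ρ₀ χ) h₀ (rhoOf_isInvol σ h₀ χ) u : Fˣ) : F)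
      = (χ u : F) := by
    rw [chiOf_val, hc]
    field_simp [cOf_ne_zero σ h₀ u]
  exact this

lemma rhoOf_chiOf {ρ₀ ρ : (T →₀ F) ≃ₗ[F] (T →₀ F)}
    (h₀ : IsDegInvInvolution σ ρ₀) (hρ : IsDegInvInvolution σ ρ) :
    rhoOf ρ₀ (chiOf σ ρ₀ ρ h₀ hρ) = ρ := by
  apply LinearEquiv.toLinearMap_injective
  apply Finsupp.lhom_ext
  intro u a
  show rhoOf ρ₀ (chiOf σ ρ₀ ρ h₀ hρ) (single u a) = ρ (single u a)
  rw [rhoOf_single σ h₀, cOf_spec σ hρ, chiOf_val]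
  congr 1
  field_simp [cOf_ne_zero σ h₀ u]

end aux3
section aux4
variable {T : Type*} [Group T] {F : Type*} [Field F] (σ : T → T → Fˣ)

open Finsupp

lemma conj_char {ρ₀ ρ₁ ρ₂ φ : (T →₀ F) ≃ₗ[F] (T →₀ F)}
    (h₀ : IsDegInvInvolution σ ρ₀) (h₁ : IsDegInvInvolution σ ρ₁)
    (h₂ : IsDegInvInvolution σ ρ₂) (hφ : IsGradedAut σ φ)
    (heq : ρ₂ = φ.trans (ρ₁.trans φ.symm)) :
    powMonoidHom 2 (etaOf σ φ hφ) = (chiOf σ ρ₀ ρ₁ h₀ h₁)⁻¹ * chiOf σ ρ₀ ρ₂ h₀ h₂ := by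
  have hc2 : ∀ u : T, cOf ρ₂ u = dOf φ u ^ 2 * cOf ρ₁ u := by
    intro u
    have : ρ₂ (single u (1 : F)) = φ.symm (ρ₁ (φ (single u 1))) := by
      rw [heq]; rfl
    rw [dOf_spec σ hφ, cOf_spec σ h₁, gradedAut_symm_single σ hφ, dOf_inv σ hφ,
      inv_inv] at this
    have := congrArg (fun f : T →₀ F => f u⁻¹) this
    simp only [Finsupp.single_eq_same] at this
    rw [cOf, this]
    ring
  ext u
  simp only [powMonoidHom_apply, MonoidHom.pow_apply, MonoidHom.mul_apply, MonoidHom.inv_apply,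
    Units.val_mul, Units.val_pow_eq_pow_val, Units.val_inv_eq_inv_val,
    chiOf_val, etaOf, MonoidHom.mk'_apply, Units.val_mk0]
  have n0 := cOf_ne_zero σ h₀ u
  have n1 := cOf_ne_zero σ h₁ u
  have hd := dOf_ne_zero σ hφ u
  rw [hc2 u]
  field_simp

lemma conj_of_char {ρ₀ ρ₁ ρ₂ : (T →₀ F) ≃ₗ[F] (T →₀ F)}
    (h₀ : IsDegInvInvolution σ ρ₀) (h₁ : IsDegInvInvolution σ ρ₁)
    (h₂ : IsDegInvInvolution σ ρ₂) (η : T →* Fˣ)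
    (hη : powMonoidHom 2 η = (chiOf σ ρ₀ ρ₁ h₀ h₁)⁻¹ * chiOf σ ρ₀ ρ₂ h₀ h₂) :
    ρ₂ = (Dmap fun u => η u).trans (ρ₁.trans (Dmap fun u => η u).symm) := by
  have hc2 : ∀ u : T, cOf ρ₂ u = ((η u : F)) ^ 2 * cOf ρ₁ u := by
    intro u
    have := congrArg (fun χ : T →* Fˣ => ((χ u : Fˣ) : F)) hη
    simp only [powMonoidHom_apply, MonoidHom.pow_apply, MonoidHom.mul_apply, MonoidHom.inv_apply,
      Units.val_mul, Units.val_pow_eq_pow_val, Units.val_inv_eq_inv_val,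
      chiOf_val] at this
    have n0 := cOf_ne_zero σ h₀ u
    have n1 := cOf_ne_zero σ h₁ u
    field_simp at this
    exact mul_left_cancel₀ n0 (by linear_combination (-cOf ρ₀ u) * this)
  apply LinearEquiv.toLinearMap_injective
  apply Finsupp.lhom_ext
  intro u a
  show ρ₂ (single u a) = (Dmap fun u => η u).symm (ρ₁ ((Dmap fun u => η u) (single u a)))
  rw [Dmap_single, cOf_spec σ h₁, Dmap_symm_single, cOf_spec σ h₂, hc2 u]
  congr 1
  have : ((η u⁻¹ : Fˣ) : F) = ((η u : F))⁻¹ := by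
    rw [map_inv]; exact Units.val_inv_eq_inv_val _
  rw [this]
  have hd : (η u : F) ≠ 0 := Units.ne_zero _
  field_simp

end aux4

/-- If `F^σ T` admits a degree-inverting involution, then the number of equivalence
classes of degree-inverting involutions (two involutions being equivalent when conjugate
by a graded automorphism) equals `|Ĥ / S(Ĥ)|`, where `Ĥ = Hom(T, Fˣ)` and `S(Ĥ)` is the
subgroup of squares of `Ĥ`. -/
theorem card_degInvInvolution_classes
    {T : Type*} [Group T] [Finite T] {F : Type*} [Field F]
    (σ : T → T → Fˣ) (hσ : IsCocycle σ)
    (hex : ∃ ρ : (T →₀ F) ≃ₗ[F] (T →₀ F), IsDegInvInvolution σ ρ) :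
    Nat.card (Quot (fun ρ₁ ρ₂ : {ρ : (T →₀ F) ≃ₗ[F] (T →₀ F) // IsDegInvInvolution σ ρ} =>
        ∃ φ : (T →₀ F) ≃ₗ[F] (T →₀ F), IsGradedAut σ φ ∧
          ρ₂.1 = φ.trans (ρ₁.1.trans φ.symm))) =
    Nat.card ((T →* Fˣ) ⧸ @MonoidHom.range (T →* Fˣ) _ (T →* Fˣ) _ (powMonoidHom 2)) := by
  obtain ⟨ρ₀, h₀⟩ := hex
  let e : {ρ : (T →₀ F) ≃ₗ[F] (T →₀ F) // IsDegInvInvolution σ ρ} ≃ (T →* Fˣ) :=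
    { toFun := fun ρ => chiOf σ ρ₀ ρ.1 h₀ ρ.2
      invFun := fun χ => ⟨rhoOf ρ₀ χ, rhoOf_isInvol σ h₀ χ⟩
      left_inv := fun ρ => Subtype.ext (rhoOf_chiOf σ h₀ ρ.2)
      right_inv := fun χ => chiOf_rhoOf σ h₀ χ }
  refine Nat.card_congr (Quot.congr e ?_)
  intro ρ₁ ρ₂
  rw [QuotientGroup.leftRel_apply]
  constructor
  · rintro ⟨φ, hφ, heq⟩
    exact ⟨etaOf σ φ hφ, (conj_char σ h₀ ρ₁.2 ρ₂.2 hφ heq).symm ▸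
      (conj_char σ h₀ ρ₁.2 ρ₂.2 hφ heq)⟩
  · rintro ⟨η, hη⟩
    refine ⟨Dmap fun u => η u, ⟨Dmap_mul σ η, fun u a => ⟨_, Dmap_single _ u a⟩⟩, ?_⟩
    exact conj_of_char σ h₀ ρ₁.2 ρ₂.2 η hη
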